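/- For any set S of n ≥ 3 points in general position in the plane, Σ_{k=3}^{n} Σ_{ℓ=0}^{n−3} (−1)^{k+ℓ} Fib(k−ℓ) · X_{k,ℓ}(S) = −Fib(n) + n − binom(n,2), where Fib is the Fibonacci sequence extended to negative indices via Fib(n) = Fib(n−1) + Fib(n−2). -/

import Mathlib

open Finset
open scoped Classical

def GenPos (S : Finset (ℝ × ℝ)) : Prop :=
  ∀ T ⊆ S, T.card = 3 → ¬ Collinear ℝ (T : Set (ℝ × ℝ))

def ConvexPos (T : Finset (ℝ × ℝ)) : Prop :=
  ∀ p ∈ T, p ∉ convexHull ℝ ((T : Set (ℝ × ℝ)) \ {p})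

/-- number of convex k-gons with vertices in S and exactly l points of S inside -/
noncomputable def X (S : Finset (ℝ × ℝ)) (k l : ℕ) : ℕ :=
  ((Finset.powersetCard k S).filter (fun T => ConvexPos T ∧
    (S.filter (fun p => p ∈ interior (convexHull ℝ (T : Set (ℝ × ℝ))))).card = l)).card

/-- number of extreme points (convex hull vertices) of S -/
noncomputable def hullVerts (S : Finset (ℝ × ℝ)) : ℕ :=
  (S.filter (fun p => p ∉ convexHull ℝ ((S : Set (ℝ × ℝ)) \ {p}))).card

/-- Fibonacci numbers extended to all integers via Fib(n) = Fib(n-1) + Fib(n-2) -/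
noncomputable def fibZ (m : ℤ) : ℤ :=
  if 0 ≤ m then Nat.fib m.toNat else (-1) ^ ((-m).toNat + 1) * Nat.fib (-m).toNat

section Aux
open Module
abbrev Pt := ℝ × ℝ

noncomputable def verts (A : Finset Pt) : Finset Pt :=
  A.filter (fun p => p ∉ convexHull ℝ ((A : Set Pt) \ {p}))

lemma verts_subset (A : Finset Pt) : verts A ⊆ A := Finset.filter_subset _ _

lemma mem_verts {A : Finset Pt} {p : Pt} :
    p ∈ verts A ↔ p ∈ A ∧ p ∉ convexHull ℝ ((A : Set Pt) \ {p}) := by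
  simp [verts]

lemma finrank_Pt : finrank ℝ Pt = 2 := by
  simp [Module.finrank_prod]

lemma hull_le {B : Set Pt} {f : Pt →L[ℝ] ℝ} {c : ℝ} (hB : ∀ b ∈ B, f b ≤ c) :
    ∀ x ∈ convexHull ℝ B, f x ≤ c := fun _ hx =>
  convexHull_min hB (convex_halfSpace_le (f.toLinearMap.isLinear) c) hx

lemma hull_lt {B : Set Pt} {f : Pt →L[ℝ] ℝ} {c : ℝ} (hB : ∀ b ∈ B, f b < c) :
    ∀ x ∈ convexHull ℝ B, f x < c := fun _ hx =>
  convexHull_min hB (convex_halfSpace_lt (f.toLinearMap.isLinear) c) hx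

lemma exists_sep {B : Finset Pt} {t : Pt} (ht : t ∉ convexHull ℝ (B : Set Pt)) :
    ∃ f : Pt →L[ℝ] ℝ, ∀ y ∈ convexHull ℝ (B : Set Pt), f y < f t := by
  obtain ⟨f, u, h1, h2⟩ := geometric_hahn_banach_point_closed (convex_convexHull ℝ _)
    (B.finite_toSet.isClosed_convexHull ℝ) ht
  exact ⟨-f, fun y hy => by have := h2 y hy; simp; linarith⟩

lemma interior_lt {C : Set Pt} {f : Pt →L[ℝ] ℝ} {c : ℝ} (hC : ∀ y ∈ C, f y ≤ c)
    {j v : Pt} (hj : j ∈ interior C) (hv : 0 < f v) : f j < c := by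
  rcases lt_or_eq_of_le (hC j (interior_subset hj)) with h | h
  · exact h
  · exfalso
    obtain ⟨ε, hε, hball⟩ := Metric.mem_nhds_iff.1 (mem_interior_iff_mem_nhds.1 hj)
    have hvne : v ≠ 0 := by rintro rfl; simp at hv
    have hnv : (0:ℝ) < ‖v‖ := norm_pos_iff.2 hvne
    set δ := ε / (2 * ‖v‖) with hδdef
    have hδ : 0 < δ := by positivity
    have hmem : j + δ • v ∈ C := by
      apply hball
      rw [Metric.mem_ball, dist_eq_norm]
      have : j + δ • v - j = δ • v := by abel
      rw [this, norm_smul, Real.norm_eq_abs, abs_of_pos hδ, hδdef]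
      have he : ε / (2 * ‖v‖) * ‖v‖ = ε / 2 := by field_simp
      rw [he]
      linarith
    have := hC _ hmem
    rw [map_add, map_smul] at this
    have : f j + δ * f v ≤ c := this
    nlinarith

lemma collinear_level {f : Pt →L[ℝ] ℝ} {v : Pt} (hv : f v ≠ 0) (c : ℝ) :
    Collinear ℝ {x : Pt | f x = c} := by
  have hker : vectorSpan ℝ {x : Pt | f x = c} ≤ LinearMap.ker f.toLinearMap := by
    rw [vectorSpan_def]
    apply Submodule.span_le.2
    rintro w hw
    obtain ⟨a, ha, b, hb, rfl⟩ := Set.mem_vsub.1 hw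
    simp only [Set.mem_setOf_eq] at ha hb
    simp only [SetLike.mem_coe, LinearMap.mem_ker]
    show f (a - b) = 0
    rw [map_sub, ha, hb, sub_self]
  have hrange : LinearMap.range f.toLinearMap = ⊤ := by
    rw [LinearMap.range_eq_top]
    intro r
    exact ⟨(r / f v) • v, by simp [smul_eq_mul]; field_simp⟩
  have hker1 : finrank ℝ (LinearMap.ker f.toLinearMap) = 1 := by
    have := LinearMap.finrank_range_add_finrank_ker f.toLinearMap
    rw [hrange, finrank_top, finrank_Pt] at this
    simp [finrank_self] at this
    omega
  rw [collinear_iff_finrank_le_one]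
  calc finrank ℝ (vectorSpan ℝ {x : Pt | f x = c})
      ≤ finrank ℝ (LinearMap.ker f.toLinearMap) := Submodule.finrank_mono hker
    _ = 1 := hker1

lemma affineSpan_top_of_not_collinear {s : Set Pt} (h : ¬ Collinear ℝ s) :
    affineSpan ℝ s = ⊤ := by
  have hne : s.Nonempty := by
    rcases Set.eq_empty_or_nonempty s with rfl | hne
    · exact absurd (collinear_empty ℝ Pt) h
    · exact hne
  rw [AffineSubspace.affineSpan_eq_top_iff_vectorSpan_eq_top_of_nonempty ℝ Pt Pt hne]
  by_contra htop
  apply h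
  rw [collinear_iff_finrank_le_one]
  by_contra hle
  push_neg at hle
  have hle2 : finrank ℝ (vectorSpan ℝ s) ≤ 2 := by
    rw [← finrank_Pt]; exact Submodule.finrank_le _
  have : finrank ℝ (vectorSpan ℝ s) = 2 := by omega
  exact htop (Submodule.eq_top_of_finrank_eq (by rw [this, finrank_Pt]))

lemma interior_hull_nonempty {A : Finset Pt} (h : ¬ Collinear ℝ (A : Set Pt)) :
    (interior (convexHull ℝ (A : Set Pt))).Nonempty := by
  rw [(convex_convexHull ℝ _).interior_nonempty_iff_affineSpan_eq_top,
    affineSpan_convexHull]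
  exact affineSpan_top_of_not_collinear h

lemma mem_hull_filter_eq {B : Finset Pt} {f : Pt →L[ℝ] ℝ} {c : ℝ}
    (hB : ∀ b ∈ B, f b ≤ c) {x : Pt} (hx : x ∈ convexHull ℝ (B : Set Pt)) (hxc : f x = c) :
    x ∈ convexHull ℝ ((B.filter (fun b => f b = c)) : Set Pt) := by
  obtain ⟨w, hw0, hw1, hwx⟩ := Finset.mem_convexHull'.1 hx
  have hfx : ∑ b ∈ B, w b * f b = c := by
    have hmap := congrArg f hwx
    rw [map_sum] at hmap
    simp only [map_smul, smul_eq_mul] at hmap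
    rw [hmap, hxc]
  have hz : ∀ b ∈ B, w b * (c - f b) = 0 := by
    apply (Finset.sum_eq_zero_iff_of_nonneg ?_).1
    · rw [Finset.sum_congr rfl (fun b _ => (mul_sub (w b) c (f b)))]
      rw [Finset.sum_sub_distrib, ← Finset.sum_mul, hw1, hfx]
      ring
    · intro b hb
      exact mul_nonneg (hw0 b hb) (sub_nonneg.2 (hB b hb))
  have hw0' : ∀ b ∈ B, f b ≠ c → w b = 0 := by
    intro b hb hfb
    rcases mul_eq_zero.1 (hz b hb) with h | h
    · exact h
    · exact absurd (by linarith [sub_eq_zero.1 h] : f b = c) hfb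
  apply Finset.mem_convexHull'.2
  refine ⟨w, fun y hy => hw0 y (Finset.mem_filter.1 hy).1, ?_, ?_⟩
  · rw [Finset.sum_filter_of_ne ?_, hw1]
    intro b hb h
    by_contra hfb
    exact h (hw0' b hb hfb)
  · rw [← hwx]
    apply Finset.sum_subset (Finset.filter_subset _ _)
    intro b hb hnb
    have : f b ≠ c := by
      intro hc; exact hnb (Finset.mem_filter.2 ⟨hb, hc⟩)
    rw [hw0' b hb this, zero_smul]

lemma hull_verts_eq (A : Finset Pt) :
    convexHull ℝ ((verts A : Finset Pt) : Set Pt) = convexHull ℝ (A : Set Pt) := by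
  apply Set.Subset.antisymm
  · exact convexHull_mono (by exact_mod_cast verts_subset A)
  · set C := convexHull ℝ (A : Set Pt) with hC
    have hconv : Convex ℝ C := convex_convexHull ℝ _
    have hcomp : IsCompact C := A.finite_toSet.isCompact_convexHull ℝ
    have hEA : C.extremePoints ℝ ⊆ (A : Set Pt) := extremePoints_convexHull_subset
    have hEV : C.extremePoints ℝ ⊆ ((verts A : Finset Pt) : Set Pt) := by
      intro x hx
      have hx' := (hconv.mem_extremePoints_iff_mem_diff_convexHull_diff).1 hx
      have hxA : x ∈ (A : Set Pt) := hEA hx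
      rw [Finset.mem_coe, mem_verts]
      refine ⟨hxA, fun hmem => hx'.2 ?_⟩
      exact convexHull_mono (Set.diff_subset_diff_left (subset_convexHull ℝ _)) hmem
    have hfin : (C.extremePoints ℝ).Finite := A.finite_toSet.subset hEA
    have hKM := closure_convexHull_extremePoints hcomp hconv
    have hclosed : IsClosed (convexHull ℝ (C.extremePoints ℝ)) :=
      hfin.isClosed_convexHull ℝ
    rw [hclosed.closure_eq] at hKM
    calc C = convexHull ℝ (C.extremePoints ℝ) := hKM.symm
      _ ⊆ convexHull ℝ ((verts A : Finset Pt) : Set Pt) := convexHull_mono hEV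

/-- a "vertex" (point not in hull of the others) admits a functional strictly maximized there -/
lemma vertex_sep {T : Finset Pt} {t : Pt} (ht : t ∈ T)
    (hv : t ∉ convexHull ℝ ((T : Set Pt) \ {t})) (hne : (T.erase t).Nonempty) :
    ∃ f : Pt →L[ℝ] ℝ, (∀ y ∈ convexHull ℝ (T : Set Pt), f y ≤ f t)
      ∧ (∀ y ∈ convexHull ℝ ((T : Set Pt) \ {t}), f y < f t)
      ∧ (∃ v : Pt, 0 < f v) := by
  have hcoe : ((T.erase t : Finset Pt) : Set Pt) = (T : Set Pt) \ {t} := by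
    simp [Finset.coe_erase]
  obtain ⟨f, hf⟩ := exists_sep (B := T.erase t) (by rw [hcoe]; exact hv)
  rw [hcoe] at hf
  obtain ⟨y₀, hy₀⟩ := hne
  have hy₀' : (y₀ : Pt) ∈ (T : Set Pt) \ {t} := by
    rw [← hcoe]; exact_mod_cast hy₀
  have hfy₀ : f y₀ < f t := hf y₀ (subset_convexHull ℝ _ hy₀')
  refine ⟨f, ?_, hf, ⟨t - y₀, by rw [map_sub]; linarith⟩⟩
  apply hull_le
  intro b hb
  by_cases hbt : b = t
  · rw [hbt]
  · exact le_of_lt (hf b (subset_convexHull ℝ _ ⟨hb, hbt⟩))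

lemma vertex_not_interior {T : Finset Pt} {t : Pt} (ht : t ∈ T)
    (hv : t ∉ convexHull ℝ ((T : Set Pt) \ {t})) (hne : (T.erase t).Nonempty) :
    t ∉ interior (convexHull ℝ (T : Set Pt)) := by
  obtain ⟨f, hle, hlt, v, hfv⟩ := vertex_sep ht hv hne
  intro hmem
  exact lt_irrefl (f t) (interior_lt hle hmem hfv)

lemma erase_nonempty_of_card {T : Finset Pt} {t : Pt} (h3 : 3 ≤ T.card) (ht : t ∈ T) :
    (T.erase t).Nonempty := by
  rw [← Finset.card_pos, Finset.card_erase_of_mem ht]; omega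

lemma vertex_not_interior' {T : Finset Pt} (hT : ConvexPos T) (h3 : 3 ≤ T.card)
    {t : Pt} (ht : t ∈ T) : t ∉ interior (convexHull ℝ (T : Set Pt)) :=
  vertex_not_interior ht (hT t ht) (erase_nonempty_of_card h3 ht)

lemma hull_union_eq {T J : Finset Pt}
    (hJ : ∀ j ∈ J, j ∈ interior (convexHull ℝ (T : Set Pt))) :
    convexHull ℝ ((T ∪ J : Finset Pt) : Set Pt) = convexHull ℝ (T : Set Pt) := by
  apply Set.Subset.antisymm
  · apply convexHull_min ?_ (convex_convexHull ℝ _)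
    rw [Finset.coe_union]
    apply Set.union_subset (subset_convexHull ℝ _)
    intro j hj
    exact interior_subset (hJ j hj)
  · exact convexHull_mono (by rw [Finset.coe_union]; exact Set.subset_union_left)

lemma verts_union_eq {T J : Finset Pt} (hT : ConvexPos T) (h3 : 3 ≤ T.card)
    (hJ : ∀ j ∈ J, j ∈ interior (convexHull ℝ (T : Set Pt))) :
    verts (T ∪ J) = T := by
  apply Finset.ext
  intro x
  rw [mem_verts]
  constructor
  · rintro ⟨hxTJ, hxv⟩
    rcases Finset.mem_union.1 hxTJ with hxT | hxJ
    · exact hxT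
    · by_cases hxT : x ∈ T
      · exact hxT
      exfalso
      apply hxv
      have hsub : (T : Set Pt) ⊆ ((T ∪ J : Finset Pt) : Set Pt) \ {x} := by
        intro y hy
        refine ⟨?_, ?_⟩
        · rw [Finset.mem_coe] at hy ⊢; exact Finset.mem_union_left _ hy
        · intro h
          rw [Set.mem_singleton_iff] at h
          subst h
          exact hxT hy
      exact convexHull_mono hsub (interior_subset (hJ x hxJ))
  · intro hxT
    refine ⟨Finset.mem_union_left _ hxT, ?_⟩
    have hvx : x ∉ convexHull ℝ ((T : Set Pt) \ {x}) := hT x hxT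
    obtain ⟨f, hle, hlt, v, hfv⟩ := vertex_sep hxT hvx (erase_nonempty_of_card h3 hxT)
    intro hmem
    have hfx : f x < f x := by
      apply hull_lt ?_ x hmem
      rintro b ⟨hb, hbx⟩
      rw [Set.mem_singleton_iff] at hbx
      rw [Finset.mem_coe, Finset.mem_union] at hb
      rcases hb with hbT | hbJ
      · exact hlt b (subset_convexHull ℝ _ ⟨hbT, hbx⟩)
      · exact interior_lt hle (hJ b hbJ) hfv
    exact lt_irrefl _ hfx

lemma not_collinear_of_card {S A : Finset Pt} (hgp : GenPos S) (hAS : A ⊆ S)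
    (h3 : 3 ≤ A.card) : ¬ Collinear ℝ (A : Set Pt) := by
  obtain ⟨B, hBA, hB3⟩ := Finset.exists_subset_card_eq h3
  intro hcol
  exact hgp B (hBA.trans hAS) hB3 (hcol.subset (by exact_mod_cast hBA))

lemma nonvertex_interior {S A : Finset Pt} (hgp : GenPos S) (hAS : A ⊆ S)
    (h3 : 3 ≤ A.card) {p : Pt} (hp : p ∈ A)
    (hmem : p ∈ convexHull ℝ ((A : Set Pt) \ {p})) :
    p ∈ interior (convexHull ℝ (A : Set Pt)) := by
  by_contra hpI
  have hnc : ¬ Collinear ℝ (A : Set Pt) := not_collinear_of_card hgp hAS h3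
  obtain ⟨a0, ha0⟩ := interior_hull_nonempty hnc
  obtain ⟨f, hf⟩ := geometric_hahn_banach_open_point
     ((convex_convexHull ℝ (A : Set Pt)).interior) isOpen_interior hpI
  have hCle : ∀ y ∈ convexHull ℝ (A : Set Pt), f y ≤ f p := by
    intro y hy
    by_contra hgt
    push_neg at hgt
    set ε := f y - f p with hε
    have hεpos : 0 < ε := by rw [hε]; linarith
    set M := |f y - f a0| + 1 with hM
    have hMpos : 0 < M := by positivity
    set t := min 1 (ε / (2 * M)) with ht
    have ht0 : 0 < t := lt_min one_pos (by positivity)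
    have ht1 : t ≤ 1 := min_le_left _ _
    have hz : (1-t) • y + t • a0 ∈ interior (convexHull ℝ (A : Set Pt)) :=
      (convex_convexHull ℝ (A : Set Pt)).combo_closure_interior_mem_interior
        (subset_closure hy) ha0 (by linarith) ht0 (by ring)
    have hzf := hf _ hz
    rw [map_add, map_smul, map_smul, smul_eq_mul, smul_eq_mul] at hzf
    have h1 : t * (f y - f a0) ≤ t * M := by
      apply mul_le_mul_of_nonneg_left ?_ ht0.le
      calc f y - f a0 ≤ |f y - f a0| := le_abs_self _
        _ ≤ M := by rw [hM]; linarith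
    have h2 : t * M ≤ ε / 2 := by
      have hle : t ≤ ε / (2 * M) := min_le_right _ _
      calc t * M ≤ (ε / (2*M)) * M := mul_le_mul_of_nonneg_right hle hMpos.le
        _ = ε / 2 := by field_simp
    have hq : f y - t * (f y - f a0) < f p := by nlinarith [hzf]
    have h3' : t * (f y - f a0) ≤ (f y - f p) / 2 := le_trans h1 h2
    linarith
  have hcoe : ((A.erase p : Finset Pt) : Set Pt) = (A : Set Pt) \ {p} := by
    simp [Finset.coe_erase]
  have hmem' : p ∈ convexHull ℝ ((A.erase p : Finset Pt) : Set Pt) := by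
    rw [hcoe]; exact hmem
  have hface := mem_hull_filter_eq (B := A.erase p) (f := f) (c := f p)
      (fun b hb => hCle b (subset_convexHull ℝ _ (Finset.mem_coe.2 (Finset.mem_of_mem_erase hb))))
      hmem' rfl
  set B' := (A.erase p).filter (fun b => f b = f p) with hB'
  have hcard : 2 ≤ B'.card := by
    by_contra hlt
    push_neg at hlt
    have h01 : B'.card = 0 ∨ B'.card = 1 := by omega
    rcases h01 with h0 | h1
    · rw [Finset.card_eq_zero] at h0
      rw [h0] at hface
      simp at hface
    · obtain ⟨b, hb⟩ := Finset.card_eq_one.1 h1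
      rw [hb] at hface
      rw [Finset.coe_singleton, convexHull_singleton, Set.mem_singleton_iff] at hface
      have hbB : b ∈ B' := by rw [hb]; exact Finset.mem_singleton_self b
      have : b ∈ A.erase p := Finset.mem_of_mem_filter b hbB
      rw [← hface] at this
      exact (Finset.mem_erase.1 this).1 rfl
  obtain ⟨v, hv, w, hw, hvw⟩ := Finset.one_lt_card.1 (by omega : 1 < B'.card)
  have hfa0 : f a0 < f p := hf a0 ha0
  have hfne : f (p - a0) ≠ 0 := by rw [map_sub]; intro h; linarith [sub_eq_zero.1 h]
  have hcol := collinear_level (f := f) (v := p - a0) hfne (f p)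
  have hvA : v ∈ A.erase p := Finset.mem_of_mem_filter v hv
  have hwA : w ∈ A.erase p := Finset.mem_of_mem_filter w hw
  have hTS : ({p, v, w} : Finset Pt) ⊆ S := by
    intro x hx
    simp only [Finset.mem_insert, Finset.mem_singleton] at hx
    rcases hx with rfl | rfl | rfl
    · exact hAS hp
    · exact hAS (Finset.mem_of_mem_erase hvA)
    · exact hAS (Finset.mem_of_mem_erase hwA)
  have hvp : v ≠ p := (Finset.mem_erase.1 hvA).1
  have hwp : w ≠ p := (Finset.mem_erase.1 hwA).1
  have hcard3 : ({p, v, w} : Finset Pt).card = 3 := by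
    rw [Finset.card_insert_of_notMem (by
      simp only [Finset.mem_insert, Finset.mem_singleton]
      push_neg
      exact ⟨Ne.symm hvp, Ne.symm hwp⟩),
      Finset.card_insert_of_notMem (by simp [hvw]), Finset.card_singleton]
  have hlev : (({p, v, w} : Finset Pt) : Set Pt) ⊆ {x : Pt | f x = f p} := by
    intro x hx
    rw [Finset.coe_insert, Finset.coe_insert, Finset.coe_singleton] at hx
    rcases hx with rfl | rfl | rfl
    · rfl
    · exact (Finset.mem_filter.1 hv).2
    · exact (Finset.mem_filter.1 hw).2
  exact hgp _ hTS hcard3 (hcol.subset hlev)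

noncomputable def IP (S T : Finset Pt) : Finset Pt :=
  S.filter (fun p => p ∈ interior (convexHull ℝ (T : Set Pt)))

lemma collinear_of_card_le_two {B : Finset Pt} (h : B.card ≤ 2) :
    Collinear ℝ (B : Set Pt) := by
  interval_cases hc : B.card
  · rw [Finset.card_eq_zero.1 hc]; simp [collinear_empty]
  · obtain ⟨a, ha⟩ := Finset.card_eq_one.1 hc
    rw [ha]; simp [collinear_singleton]
  · obtain ⟨a, b, _, hab⟩ := Finset.card_eq_two.1 hc
    rw [hab]; simp [collinear_pair]

lemma verts_convexPos (A : Finset Pt) : ConvexPos (verts A) := by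
  intro p hp
  have h := (mem_verts.1 hp).2
  intro hmem
  apply h
  apply convexHull_mono ?_ hmem
  apply Set.diff_subset_diff_left
  exact_mod_cast verts_subset A

lemma verts_card_ge {S A : Finset Pt} (hgp : GenPos S) (hAS : A ⊆ S) (h3 : 3 ≤ A.card) :
    3 ≤ (verts A).card := by
  by_contra h
  push_neg at h
  have hcol : Collinear ℝ ((verts A : Finset Pt) : Set Pt) :=
    collinear_of_card_le_two (by omega)
  have hnc : ¬ Collinear ℝ (A : Set Pt) := not_collinear_of_card hgp hAS h3
  apply hnc
  have hsub : (A : Set Pt) ⊆ convexHull ℝ ((verts A : Finset Pt) : Set Pt) := by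
    rw [hull_verts_eq]; exact subset_convexHull ℝ _
  have hspan : convexHull ℝ ((verts A : Finset Pt) : Set Pt)
      ⊆ (affineSpan ℝ ((verts A : Finset Pt) : Set Pt) : Set Pt) :=
    convexHull_subset_affineSpan _
  have hspan_col : Collinear ℝ ((affineSpan ℝ ((verts A : Finset Pt) : Set Pt) : Set Pt)) := by
    rw [collinear_iff_rank_le_one] at hcol ⊢
    have : vectorSpan ℝ ((affineSpan ℝ ((verts A : Finset Pt) : Set Pt) : Set Pt))
        = vectorSpan ℝ ((verts A : Finset Pt) : Set Pt) := by
      rw [← direction_affineSpan, AffineSubspace.affineSpan_coe, direction_affineSpan]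
    rw [this]
    exact hcol
  exact hspan_col.subset (hsub.trans hspan)

lemma IP_disjoint {S T : Finset Pt} (hT : ConvexPos T) (h3 : 3 ≤ T.card) :
    ∀ t ∈ T, t ∉ IP S T := by
  intro t ht hmem
  exact vertex_not_interior' hT h3 ht (Finset.mem_filter.1 hmem).2

lemma fiber_card {S : Finset Pt} (hgp : GenPos S) {m : ℕ} (hm : 3 ≤ m) {T : Finset Pt}
    (hTS : T ⊆ S) (hT : ConvexPos T) (h3 : 3 ≤ T.card) :
    ((Finset.powersetCard m S).filter (fun A => verts A = T)).card
      = if T.card ≤ m then (IP S T).card.choose (m - T.card) else 0 := by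
  by_cases hle : T.card ≤ m
  · rw [if_pos hle, ← Finset.card_powersetCard]
    apply Finset.card_bij' (fun A _ => A \ T) (fun J _ => T ∪ J)
    · -- maps forward
      intro A hA
      rw [Finset.mem_filter, Finset.mem_powersetCard] at hA
      obtain ⟨⟨hAS, hAcard⟩, hvA⟩ := hA
      have hTA : T ⊆ A := hvA ▸ verts_subset A
      rw [Finset.mem_powersetCard]
      constructor
      · intro x hx
        rw [Finset.mem_sdiff] at hx
        obtain ⟨hxA, hxT⟩ := hx
        have hxV : x ∉ verts A := fun h => hxT (hvA ▸ h)
        have hxconv : x ∈ convexHull ℝ ((A : Set Pt) \ {x}) := by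
          rw [mem_verts] at hxV
          push_neg at hxV
          exact hxV hxA
        have hint := nonvertex_interior hgp hAS (by omega) hxA hxconv
        rw [← hull_verts_eq, hvA] at hint
        exact Finset.mem_filter.2 ⟨hAS hxA, hint⟩
      · rw [Finset.card_sdiff_of_subset hTA, hAcard]
    · -- maps backward
      intro J hJ
      rw [Finset.mem_powersetCard] at hJ
      obtain ⟨hJIP, hJcard⟩ := hJ
      have hJint : ∀ j ∈ J, j ∈ interior (convexHull ℝ (T : Set Pt)) :=
        fun j hj => (Finset.mem_filter.1 (hJIP hj)).2
      have hdisj : Disjoint T J := by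
        rw [Finset.disjoint_left]
        intro t ht htJ
        exact IP_disjoint hT h3 t ht (hJIP htJ)
      rw [Finset.mem_filter, Finset.mem_powersetCard]
      refine ⟨⟨?_, ?_⟩, verts_union_eq hT h3 hJint⟩
      · apply Finset.union_subset hTS
        exact fun j hj => (Finset.mem_filter.1 (hJIP hj)).1
      · rw [Finset.card_union_of_disjoint hdisj, hJcard]
        omega
    · -- left inverse
      intro A hA
      rw [Finset.mem_filter, Finset.mem_powersetCard] at hA
      have hTA : T ⊆ A := hA.2 ▸ verts_subset A
      exact Finset.union_sdiff_of_subset hTA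
    · -- right inverse
      intro J hJ
      rw [Finset.mem_powersetCard] at hJ
      have hdisj : Disjoint T J := by
        rw [Finset.disjoint_left]
        intro t ht htJ
        exact IP_disjoint hT h3 t ht (hJ.1 htJ)
      exact Finset.union_sdiff_cancel_left hdisj
  · rw [if_neg hle, Finset.card_eq_zero, Finset.filter_eq_empty_iff]
    intro A hA hvA
    rw [Finset.mem_powersetCard] at hA
    have hTA : T ⊆ A := hvA ▸ verts_subset A
    exact hle (hA.2 ▸ Finset.card_le_card hTA)

lemma count_subsets {S : Finset Pt} (hgp : GenPos S) (hn : 3 ≤ S.card)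
    {m : ℕ} (hm : 3 ≤ m) :
    S.card.choose m
      = ∑ k ∈ Icc 3 S.card, ∑ l ∈ range (S.card - 2),
          X S k l * (if k ≤ m then Nat.choose l (m - k) else 0) := by
  classical
  set n := S.card with hn'
  set CP := S.powerset.filter (fun T => ConvexPos T ∧ 3 ≤ T.card) with hCP
  have hmaps : ∀ A ∈ Finset.powersetCard m S, verts A ∈ CP := by
    intro A hA
    rw [Finset.mem_powersetCard] at hA
    rw [hCP, Finset.mem_filter, Finset.mem_powerset]
    exact ⟨(verts_subset A).trans hA.1, verts_convexPos A,
      verts_card_ge hgp hA.1 (hA.2 ▸ hm)⟩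
  rw [← Finset.card_powersetCard m S, Finset.card_eq_sum_card_fiberwise hmaps]
  have hfib : ∀ T ∈ CP, ((Finset.powersetCard m S).filter (fun A => verts A = T)).card
      = (if T.card ≤ m then (IP S T).card.choose (m - T.card) else 0) := by
    intro T hT
    rw [hCP, Finset.mem_filter, Finset.mem_powerset] at hT
    exact fiber_card hgp hm hT.1 hT.2.1 hT.2.2
  rw [Finset.sum_congr rfl hfib]
  have hmaps2 : ∀ T ∈ CP, (T.card, (IP S T).card) ∈ (Icc 3 n) ×ˢ (range (n - 2)) := by
    intro T hT
    rw [hCP, Finset.mem_filter, Finset.mem_powerset] at hT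
    obtain ⟨hTS, hTcp, hT3⟩ := hT
    rw [Finset.mem_product, Finset.mem_Icc, Finset.mem_range]
    have hTn : T.card ≤ n := Finset.card_le_card hTS
    refine ⟨⟨hT3, hTn⟩, ?_⟩
    have hsub : IP S T ⊆ S \ T := by
      intro x hx
      rw [Finset.mem_sdiff]
      refine ⟨(Finset.mem_filter.1 hx).1, fun hxT => IP_disjoint hTcp hT3 x hxT hx⟩
    have := Finset.card_le_card hsub
    rw [Finset.card_sdiff_of_subset hTS] at this
    omega
  rw [← Finset.sum_fiberwise_of_maps_to hmaps2
    (fun T => if T.card ≤ m then (IP S T).card.choose (m - T.card) else 0)]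
  rw [Finset.sum_product]
  apply Finset.sum_congr rfl
  intro k hk
  apply Finset.sum_congr rfl
  intro l hl
  have hk3 : 3 ≤ k := (Finset.mem_Icc.1 hk).1
  have hXeq : (CP.filter (fun T => (T.card, (IP S T).card) = (k, l))).card = X S k l := by
    congr 1
    apply Finset.ext
    intro T
    rw [hCP]
    simp only [Finset.mem_filter, Finset.mem_powerset, Finset.mem_powersetCard, X,
      Prod.mk.injEq, IP]
    constructor
    · rintro ⟨⟨hTS, hcp, h3⟩, hck, hcl⟩
      exact ⟨⟨hTS, hck⟩, hcp, hcl⟩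
    · rintro ⟨⟨hTS, hck⟩, hcp, hcl⟩
      exact ⟨⟨hTS, hcp, by omega⟩, hck, hcl⟩
  rw [← hXeq]
  have hterm : ∀ T ∈ CP.filter (fun T => (T.card, (IP S T).card) = (k, l)),
      (if T.card ≤ m then (IP S T).card.choose (m - T.card) else 0)
        = (if k ≤ m then Nat.choose l (m - k) else 0) := by
    intro T hT
    have h := (Finset.mem_filter.1 hT).2
    rw [Prod.mk.injEq] at h
    rw [h.1, h.2]
  rw [Finset.sum_congr rfl hterm, Finset.sum_const, smul_eq_mul]
lemma fibZ_natCast (n : ℕ) : fibZ n = Nat.fib n := by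
  simp [fibZ]

lemma fibZ_neg_natCast (n : ℕ) : fibZ (-(n:ℤ)) = (-1) ^ (n + 1) * Nat.fib n := by
  rcases Nat.eq_zero_or_pos n with h | h
  · subst h; simp [fibZ]
  · rw [fibZ, if_neg (by omega), neg_neg]
    simp

lemma fibZ_add_two (m : ℤ) : fibZ (m + 2) = fibZ (m + 1) + fibZ m := by
  rcases m with a | a
  · -- m = a ≥ 0
    have h0 : ((a : ℤ) + 2) = ((a + 2 : ℕ) : ℤ) := by push_cast; ring
    have h1 : ((a : ℤ) + 1) = ((a + 1 : ℕ) : ℤ) := by push_cast; ring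
    rw [Int.ofNat_eq_natCast, h0, h1, fibZ_natCast, fibZ_natCast, fibZ_natCast,
      Nat.fib_add_two]
    push_cast; ring
  · -- m = -(a+1)
    match a with
    | 0 => simp [fibZ]
    | 1 =>
        show fibZ 0 = fibZ (-1) + fibZ (-2)
        have h1 : (-1 : ℤ) = -((1:ℕ):ℤ) := by norm_num
        have h2 : (-2 : ℤ) = -((2:ℕ):ℤ) := by norm_num
        rw [h1, h2, fibZ_neg_natCast, fibZ_neg_natCast]
        simp [fibZ]
    | (i+2) =>
        have e0 : (Int.negSucc (i+2) + 2) = -((i+1 : ℕ) : ℤ) := by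
          rw [Int.negSucc_eq]; push_cast; ring
        have e1 : (Int.negSucc (i+2) + 1) = -((i+2 : ℕ) : ℤ) := by
          rw [Int.negSucc_eq]; push_cast; ring
        have e2 : (Int.negSucc (i+2) : ℤ) = -((i+3 : ℕ) : ℤ) := by
          rw [Int.negSucc_eq]; push_cast; ring
        rw [e0, e1, e2, fibZ_neg_natCast, fibZ_neg_natCast, fibZ_neg_natCast]
        have hf : (Nat.fib (i+3) : ℤ) = Nat.fib (i+2) + Nat.fib (i+1) := by
          rw [show i+3 = (i+1)+2 by ring, Nat.fib_add_two]; push_cast; ring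
        rw [hf]
        ring

lemma fibZ_sub_one (m : ℤ) : fibZ (m - 1) = fibZ (m + 1) - fibZ m := by
  have := fibZ_add_two (m - 1)
  have h1 : m - 1 + 2 = m + 1 := by ring
  have h2 : m - 1 + 1 = m := by ring
  rw [h1, h2] at this
  linarith

lemma key_sum (l : ℕ) : ∀ k : ℤ,
    ∑ j ∈ range (l+1), (-1:ℤ)^j * (l.choose j) * fibZ (k + j) = (-1)^l * fibZ (k - l) := by
  induction l with
  | zero => intro k; simp
  | succ l ih =>
    intro k
    have expand : ∑ j ∈ range (l+2), (-1:ℤ)^j * ((l+1).choose j) * fibZ (k + j)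
        = (∑ j ∈ range (l+1), (-1:ℤ)^j * (l.choose j) * fibZ (k + j))
          - ∑ j ∈ range (l+1), (-1:ℤ)^j * (l.choose j) * fibZ ((k+1) + j) := by
      rw [Finset.sum_range_succ' (fun j => (-1:ℤ)^j * ((l+1).choose j) * fibZ (k + j))]
      push_cast
      have step : ∀ j ∈ range (l+1), (-1:ℤ)^(j+1) * ((l+1).choose (j+1)) * fibZ (k + (j+1))
          = ((-1:ℤ)^(j+1) * (l.choose j) * fibZ ((k+1) + j))
            + ((-1:ℤ)^(j+1) * (l.choose (j+1)) * fibZ (k + (j+1))) := by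
        intro j _
        rw [Nat.choose_succ_succ]
        have : k + (↑j + 1) = (k+1) + j := by ring
        rw [this]
        push_cast
        ring
      rw [Finset.sum_congr rfl step, Finset.sum_add_distrib]
      have e1 : ∑ j ∈ range (l+1), (-1:ℤ)^(j+1) * (l.choose j) * fibZ ((k+1) + j)
          = -∑ j ∈ range (l+1), (-1:ℤ)^j * (l.choose j) * fibZ ((k+1) + j) := by
        rw [← Finset.sum_neg_distrib]
        apply Finset.sum_congr rfl
        intro j _; ring
      have e2 : ∑ j ∈ range (l+1), (-1:ℤ)^(j+1) * (l.choose (j+1)) * fibZ (k + (j+1))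
          = (∑ j ∈ range (l+1), (-1:ℤ)^j * (l.choose j) * fibZ (k + j))
             - (-1:ℤ)^0 * (l.choose 0) * fibZ (k + 0) := by
        rw [eq_sub_iff_add_eq]
        have := Finset.sum_range_succ' (fun j => (-1:ℤ)^j * (l.choose j) * fibZ (k + j)) l
        rw [this]
        have hz : ((-1:ℤ)^(l+1) * (l.choose (l+1)) * fibZ (k + (l+1))) = 0 := by
          simp [Nat.choose_succ_self]
        rw [Finset.sum_range_succ (fun j => (-1:ℤ)^(j+1) * (l.choose (j+1)) * fibZ (k + (j+1))) l, hz]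
        push_cast
        ring
      rw [e1, e2]
      simp
      ring
    rw [expand, ih k, ih (k+1)]
    have : k - (l : ℤ) - 1 = k - (l+1 : ℕ) := by push_cast; ring
    rw [← this, fibZ_sub_one]
    have h2 : k + 1 - l = k - l + 1 := by ring
    rw [h2]
    push_cast
    ring

lemma fib_inner_sum (n k l : ℕ) (hk : 3 ≤ k) (hkl : k + l ≤ n) :
    ∑ m ∈ Icc 3 n, (-1:ℤ)^m * fibZ m * (if k ≤ m then (l.choose (m-k) : ℤ) else 0)
      = (-1:ℤ)^(k+l) * fibZ ((k:ℤ) - l) := by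
  have hsub : Icc k (k+l) ⊆ Icc 3 n := by
    intro m hm; rw [Finset.mem_Icc] at *; omega
  rw [← Finset.sum_subset hsub (by
    intro m hm hnot
    rw [Finset.mem_Icc] at hm
    rw [Finset.mem_Icc] at hnot
    by_cases h : k ≤ m
    · rw [if_pos h]
      have : l < m - k := by omega
      rw [Nat.choose_eq_zero_of_lt this]
      simp
    · rw [if_neg h]; ring)]
  rw [← Finset.Ico_add_one_right_eq_Icc, Finset.sum_Ico_eq_sum_range]
  have hr : k + l + 1 - k = l + 1 := by omega
  rw [hr]
  have hterm : ∀ i ∈ range (l+1),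
      (-1:ℤ)^(k+i) * fibZ ((k+i : ℕ) : ℤ) * (if k ≤ k + i then (l.choose (k+i-k) : ℤ) else 0)
        = (-1:ℤ)^k * ((-1:ℤ)^i * (l.choose i) * fibZ ((k:ℤ) + i)) := by
    intro i _
    rw [if_pos (Nat.le_add_right k i)]
    have h1 : k + i - k = i := by omega
    have h2 : ((k + i : ℕ) : ℤ) = (k:ℤ) + i := by push_cast; ring
    rw [h1, h2, pow_add]
    ring
  rw [Finset.sum_congr rfl hterm, ← Finset.mul_sum, key_sum l (k:ℤ), pow_add]
  ring

lemma fib_final_sum (n : ℕ) (hn : 3 ≤ n) :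
    ∑ m ∈ Icc 3 n, (-1:ℤ)^m * fibZ m * (n.choose m : ℤ)
      = -fibZ n + n - (n.choose 2 : ℤ) := by
  have base := key_sum n (0:ℤ)
  have hneg : (-1:ℤ)^n * fibZ (0 - (n:ℤ)) = -fibZ n := by
    rw [zero_sub, fibZ_neg_natCast, fibZ_natCast, ← mul_assoc, ← pow_add]
    have : n + (n+1) = 2*n + 1 := by ring
    rw [this, pow_succ, pow_mul]
    simp
  have base2 : ∑ j ∈ range (n+1), (-1:ℤ)^j * fibZ j * (n.choose j : ℤ) = -fibZ n := by
    rw [← hneg, ← base]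
    apply Finset.sum_congr rfl
    intro j _
    rw [zero_add]
    rw [show ((j:ℕ):ℤ) = (j:ℤ) from rfl]
    rw [fibZ_natCast]
    ring
  have hsplit : ∑ j ∈ range 3, (-1:ℤ)^j * fibZ j * (n.choose j : ℤ)
      + ∑ m ∈ Icc 3 n, (-1:ℤ)^m * fibZ m * (n.choose m : ℤ)
      = ∑ j ∈ range (n+1), (-1:ℤ)^j * fibZ j * (n.choose j : ℤ) := by
    rw [Finset.range_eq_Ico, Finset.range_eq_Ico, ← Finset.Ico_add_one_right_eq_Icc 3 n]
    exact Finset.sum_Ico_consecutive _ (by omega) (by omega)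
  have hsmall : ∑ j ∈ range 3, (-1:ℤ)^j * fibZ j * (n.choose j : ℤ)
      = -(n:ℤ) + (n.choose 2 : ℤ) := by
    have f0 : fibZ 0 = 0 := by rw [show (0:ℤ) = ((0:ℕ):ℤ) from rfl, fibZ_natCast]; simp
    have f1 : fibZ 1 = 1 := by rw [show (1:ℤ) = ((1:ℕ):ℤ) from rfl, fibZ_natCast]; simp
    have f2 : fibZ 2 = 1 := by rw [show (2:ℤ) = ((2:ℕ):ℤ) from rfl, fibZ_natCast]; simp
    rw [Finset.sum_range_succ, Finset.sum_range_succ, Finset.sum_range_succ,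
      Finset.sum_range_zero]
    push_cast
    rw [f0, f1, f2]
    simp [Nat.choose_one_right]
  have := hsplit
  rw [base2, hsmall] at this
  linarith

lemma X_bound {S : Finset Pt} {k l : ℕ} (hk3 : 3 ≤ k) (hX : X S k l ≠ 0) :
    k + l ≤ S.card := by
  classical
  have hne : ((Finset.powersetCard k S).filter (fun T => ConvexPos T ∧
      (S.filter (fun p => p ∈ interior (convexHull ℝ (T : Set (ℝ × ℝ))))).card = l)).Nonempty := by
    rw [← Finset.card_pos]
    exact Nat.pos_of_ne_zero hX
  obtain ⟨T, hT⟩ := hne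
  rw [Finset.mem_filter, Finset.mem_powersetCard] at hT
  obtain ⟨⟨hTS, hTk⟩, hcp, hcl⟩ := hT
  have hcl' : (IP S T).card = l := hcl
  have hdisj : Disjoint T (IP S T) := by
    rw [Finset.disjoint_left]
    exact fun t ht htI => IP_disjoint hcp (by omega) t ht htI
  have hsub : T ∪ IP S T ⊆ S :=
    Finset.union_subset hTS (Finset.filter_subset _ _)
  have := Finset.card_le_card hsub
  rw [Finset.card_union_of_disjoint hdisj, hTk, hcl'] at this
  exact this

end Aux

theorem stmt9 (S : Finset (ℝ × ℝ)) (hgp : GenPos S) (hn : 3 ≤ S.card) :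
    ∑ k ∈ Finset.Icc 3 S.card, ∑ l ∈ Finset.range (S.card - 2),
      (-1 : ℤ) ^ (k + l) * fibZ ((k : ℤ) - l) * X S k l =
    -fibZ S.card + S.card - S.card.choose 2 := by
  classical
  set n := S.card with hn'
  calc ∑ k ∈ Icc 3 n, ∑ l ∈ range (n-2), (-1:ℤ)^(k+l) * fibZ ((k:ℤ) - l) * X S k l
      = ∑ k ∈ Icc 3 n, ∑ l ∈ range (n-2), ∑ m ∈ Icc 3 n,
          (-1:ℤ)^m * fibZ m * ((X S k l * (if k ≤ m then l.choose (m-k) else 0) : ℕ) : ℤ) := by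
        apply Finset.sum_congr rfl
        intro k hk
        apply Finset.sum_congr rfl
        intro l hl
        have hk3 : 3 ≤ k := (Finset.mem_Icc.1 hk).1
        by_cases hX : X S k l = 0
        · rw [hX]
          simp
        · have hkl : k + l ≤ n := X_bound hk3 hX
          have hinner := fib_inner_sum n k l hk3 hkl
          calc (-1:ℤ)^(k+l) * fibZ ((k:ℤ)-l) * X S k l
              = (X S k l : ℤ) * ∑ m ∈ Icc 3 n,
                  (-1:ℤ)^m * fibZ m * (if k ≤ m then (l.choose (m-k) : ℤ) else 0) := by
                rw [hinner]; ring
            _ = ∑ m ∈ Icc 3 n, (-1:ℤ)^m * fibZ m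
                  * ((X S k l * (if k ≤ m then l.choose (m-k) else 0) : ℕ) : ℤ) := by
                rw [Finset.mul_sum]
                apply Finset.sum_congr rfl
                intro m _
                push_cast
                split_ifs <;> ring
    _ = ∑ m ∈ Icc 3 n, ∑ k ∈ Icc 3 n, ∑ l ∈ range (n-2),
          (-1:ℤ)^m * fibZ m * ((X S k l * (if k ≤ m then l.choose (m-k) else 0) : ℕ) : ℤ) := by
        rw [Finset.sum_congr rfl (fun k _ => Finset.sum_comm)]
        rw [Finset.sum_comm]
    _ = ∑ m ∈ Icc 3 n, (-1:ℤ)^m * fibZ m * ((n.choose m : ℕ) : ℤ) := by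
        apply Finset.sum_congr rfl
        intro m hm
        have hm3 : 3 ≤ m := (Finset.mem_Icc.1 hm).1
        have hcount := count_subsets hgp hn (m := m) hm3
        calc ∑ k ∈ Icc 3 n, ∑ l ∈ range (n-2),
              (-1:ℤ)^m * fibZ m * ((X S k l * (if k ≤ m then l.choose (m-k) else 0) : ℕ) : ℤ)
            = (-1:ℤ)^m * fibZ m * ∑ k ∈ Icc 3 n, ∑ l ∈ range (n-2),
                ((X S k l * (if k ≤ m then l.choose (m-k) else 0) : ℕ) : ℤ) := by
              rw [Finset.mul_sum]
              apply Finset.sum_congr rfl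
              intro k _
              rw [Finset.mul_sum]
          _ = (-1:ℤ)^m * fibZ m * ((n.choose m : ℕ) : ℤ) := by
              congr 1
              rw [hcount]
              push_cast
              rfl
    _ = -fibZ n + n - (n.choose 2 : ℤ) := fib_final_sum n hn
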